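/- Determinism of top-level closed type family reduction under pairwise compatibility: if every pair of equations of a type family is compatible (either their left-hand sides are apart, or any common instance yields equal right-hand sides), then whenever an application F τ̄ reduces at top level by equation i to σ₁ and by equation j to σ₂, we have σ₁ = σ₂. -/

import Mathlib

inductive Tm where
  | var : ℕ → Tm
  | app : ℕ → List Tm → Tm
deriving Repr

def Tm.subst (θ : ℕ → Tm) : Tm → Tm
  | .var n => θ n
  | .app f args => .app f (args.attach.map fun x => Tm.subst θ x.1)
decreasing_by
  have := List.sizeOf_lt_of_mem x.2
  simp only [Tm.app.sizeOf_spec]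
  omega

inductive Tm.FreeIn : ℕ → Tm → Prop
  | var (n : ℕ) : Tm.FreeIn n (.var n)
  | app {n f t} {args : List Tm} : t ∈ args → Tm.FreeIn n t → Tm.FreeIn n (.app f args)

/-- `θ'` unifies the two lists of terms. -/
def Unifies (θ' : ℕ → Tm) (σs τs : List Tm) : Prop :=
  σs.map (Tm.subst θ') = τs.map (Tm.subst θ')

/-- A type family equation ∀ᾱ. F σ̄ ∼ σ₀, with left-hand side argument list
`lhs` and right-hand side `rhs`. -/
structure Equation where
  lhs : List Tm
  rhs : Tm

/-- Free variables of the right-hand side occur in the left-hand side. -/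
def Equation.WellScoped (E : Equation) : Prop :=
  ∀ n, Tm.FreeIn n E.rhs → ∃ t ∈ E.lhs, Tm.FreeIn n t

/-- Each variable occurs at most once in the left-hand side (linearity). -/
def Equation.Linear (E : Equation) : Prop :=
  ∀ n, ∀ i j : Fin E.lhs.length,
    Tm.FreeIn n (E.lhs.get i) → Tm.FreeIn n (E.lhs.get j) → i = j

/-- Two equations are compatible: their left-hand sides are apart, or any
common instance yields equal right-hand sides. -/
def Compatible (E₁ E₂ : Equation) : Prop :=
  (¬ ∃ θ, Unifies θ E₁.lhs E₂.lhs) ∨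
  (∀ θ, Unifies θ E₁.lhs E₂.lhs → Tm.subst θ E₁.rhs = Tm.subst θ E₂.rhs)

/-- `F τ̄` reduces at top level by equation `E` to `σ`: the arguments are an
instance of the left-hand side and `σ` is the corresponding instance of the
right-hand side. -/
def ReducesTo (E : Equation) (τs : List Tm) (σ : Tm) : Prop :=
  ∃ θ : ℕ → Tm, τs = E.lhs.map (Tm.subst θ) ∧ σ = Tm.subst θ E.rhs


theorem subst_congr : ∀ (t : Tm) (θ₁ θ₂ : ℕ → Tm),
    (∀ n, Tm.FreeIn n t → θ₁ n = θ₂ n) → t.subst θ₁ = t.subst θ₂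
  | .var n, θ₁, θ₂, h => by simpa [Tm.subst] using h n (.var n)
  | .app f args, θ₁, θ₂, h => by
    simp only [Tm.subst, Tm.app.injEq, true_and]
    apply List.map_congr_left
    intro x hx
    have := List.sizeOf_lt_of_mem x.2
    exact subst_congr x.1 θ₁ θ₂ fun n hn => h n (.app x.2 hn)
termination_by t => sizeOf t
decreasing_by simp only [Tm.app.sizeOf_spec]; omega

theorem eq_of_subst_eq : ∀ (t : Tm) (θ₁ θ₂ : ℕ → Tm),
    t.subst θ₁ = t.subst θ₂ → ∀ n, Tm.FreeIn n t → θ₁ n = θ₂ n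
  | .var m, θ₁, θ₂, h, n, hn => by
    cases hn; simpa [Tm.subst] using h
  | .app f args, θ₁, θ₂, h, n, hn => by
    cases hn with
    | app ht hfree =>
      rename_i t
      simp only [Tm.subst, Tm.app.injEq, true_and] at h
      have hmem : (⟨t, ht⟩ : {x // x ∈ args}) ∈ args.attach := List.mem_attach _ _
      have heq := List.map_eq_map_iff.mp h _ hmem
      have := List.sizeOf_lt_of_mem ht
      exact eq_of_subst_eq t θ₁ θ₂ heq n hfree
termination_by t => sizeOf t
decreasing_by simp only [Tm.app.sizeOf_spec]; omega

/-- Determinism of top-level closed type family reduction under pairwise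
compatibility: if all equations of the family are well-scoped, linear, use
disjoint variables, and are pairwise compatible, then reducing F τ̄ by
equation i and by equation j yields the same result. -/
theorem closed_family_reduction_deterministic (Es : List Equation)
    (hws : ∀ E ∈ Es, E.WellScoped)
    (hlin : ∀ E ∈ Es, E.Linear)
    (hvars : ∀ i j : Fin Es.length, i ≠ j → ∀ n,
      (∃ t ∈ (Es.get i).lhs, Tm.FreeIn n t) →
      ¬ ∃ t ∈ (Es.get j).lhs, Tm.FreeIn n t)
    (hcompat : ∀ E₁ ∈ Es, ∀ E₂ ∈ Es, Compatible E₁ E₂)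
    (i j : Fin Es.length) (τs : List Tm) (σ₁ σ₂ : Tm)
    (h₁ : ReducesTo (Es.get i) τs σ₁)
    (h₂ : ReducesTo (Es.get j) τs σ₂) :
    σ₁ = σ₂ := by
  classical
  obtain ⟨θ₁, hτ₁, hσ₁⟩ := h₁
  obtain ⟨θ₂, hτ₂, hσ₂⟩ := h₂
  subst hσ₁ hσ₂
  have hmemi : Es.get i ∈ Es := Es.get_mem i
  have hmemj : Es.get j ∈ Es := Es.get_mem j
  -- pointwise equality on lhs elements
  have hmaps : (Es.get i).lhs.map (Tm.subst θ₁) = (Es.get j).lhs.map (Tm.subst θ₂) := by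
    rw [← hτ₁, hτ₂]
  by_cases hij : i = j
  · subst hij
    have hpt : ∀ t ∈ (Es.get i).lhs, Tm.subst θ₁ t = Tm.subst θ₂ t :=
      List.map_eq_map_iff.mp hmaps
    apply subst_congr
    intro n hn
    obtain ⟨t, ht, hfree⟩ := hws _ hmemi n hn
    exact eq_of_subst_eq t θ₁ θ₂ (hpt t ht) n hfree
  · set θ : ℕ → Tm := fun n => if ∃ t ∈ (Es.get i).lhs, Tm.FreeIn n t then θ₁ n else θ₂ n with hθ
    have hθi : ∀ n, (∃ t ∈ (Es.get i).lhs, Tm.FreeIn n t) → θ n = θ₁ n := by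
      intro n h; simp only [hθ]; exact if_pos h
    have hθj : ∀ n, (∃ t ∈ (Es.get j).lhs, Tm.FreeIn n t) → θ n = θ₂ n := by
      intro n h
      have : ¬ ∃ t ∈ (Es.get i).lhs, Tm.FreeIn n t := fun hc => hvars i j hij n hc h
      simp only [hθ]; exact if_neg this
    have hli : (Es.get i).lhs.map (Tm.subst θ) = (Es.get i).lhs.map (Tm.subst θ₁) := by
      apply List.map_congr_left
      intro t ht
      exact subst_congr t θ θ₁ fun n hn => hθi n ⟨t, ht, hn⟩
    have hlj : (Es.get j).lhs.map (Tm.subst θ) = (Es.get j).lhs.map (Tm.subst θ₂) := by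
      apply List.map_congr_left
      intro t ht
      exact subst_congr t θ θ₂ fun n hn => hθj n ⟨t, ht, hn⟩
    have huni : Unifies θ (Es.get i).lhs (Es.get j).lhs := by
      unfold Unifies; rw [hli, hlj, hmaps]
    have hrhs : Tm.subst θ (Es.get i).rhs = Tm.subst θ (Es.get j).rhs := by
      rcases hcompat _ hmemi _ hmemj with h | h
      · exact absurd ⟨θ, huni⟩ h
      · exact h θ huni
    have e1 : Tm.subst θ₁ (Es.get i).rhs = Tm.subst θ (Es.get i).rhs :=
      subst_congr _ _ _ fun n hn => (hθi n (hws _ hmemi n hn)).symm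
    have e2 : Tm.subst θ (Es.get j).rhs = Tm.subst θ₂ (Es.get j).rhs :=
      subst_congr _ _ _ fun n hn => hθj n (hws _ hmemj n hn)
    rw [e1, hrhs, e2]
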